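/- arXiv:2507.05243 — 5 statements merged into one kernel-verified Lean document; each statement's English description precedes it below -/
import Mathlib

section
/- Let (I, ≼) be a nonempty directed preorder, let h : I → [0, ∞] be any function with values in the extended nonnegative reals, and let c ∈ [0, ∞]. Suppose that for every i ∈ I one has c ≤ sup { h(j) : j ∈ I, i ≼ j }. Then there exists a sequence i : ℕ → I with i(n) ≼ i(n+1) for all n, such that c ≤ limsup_{n → ∞} h(i(n)). -/
/-- Let `(I, ≼)` be a nonempty directed preorder, `h : I → [0,∞]`, and
`c ∈ [0,∞]`.  If for every `i` one has `c ≤ sup { h j : i ≼ j }`, then there is an increasing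
sequence `i : ℕ → I` with `c ≤ limsup_n h (i n)`. -/
theorem sequential_control_of_directed_sup
    (I : Type*) [Preorder I] [Nonempty I] [IsDirected I (· ≤ ·)]
    (h : I → ENNReal) (c : ENNReal)
    (hc : ∀ i : I, c ≤ ⨆ j, ⨆ (_ : i ≤ j), h j) :
    ∃ i : ℕ → I, (∀ n : ℕ, i n ≤ i (n + 1)) ∧
      c ≤ Filter.limsup (fun n => h (i n)) Filter.atTop := by
  rcases eq_or_lt_of_le (zero_le : (0 : ENNReal) ≤ c) with hc0 | hc0
  · exact ⟨fun _ => Classical.arbitrary I, fun _ => le_refl _, by simp [← hc0]⟩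
  obtain ⟨u, hu_mono, hu_mem, hu_tend⟩ := exists_seq_strictMono_tendsto' hc0
  have key : ∀ (n : ℕ) (i : I), ∃ j, i ≤ j ∧ u n < h j := by
    intro n i
    have h1 : u n < ⨆ j, ⨆ (_ : i ≤ j), h j := lt_of_lt_of_le (hu_mem n).2 (hc i)
    simpa [lt_iSup_iff] using h1
  let i : ℕ → I := fun n => Nat.rec (Classical.arbitrary I)
    (fun n prev => (key n prev).choose) n
  have hstep : ∀ n, i n ≤ i (n + 1) ∧ u n < h (i (n + 1)) := fun n =>
    (key n (i n)).choose_spec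
  refine ⟨i, fun n => (hstep n).1, ?_⟩
  have hv_tend : Filter.Tendsto (fun m => u (m - 1)) Filter.atTop (nhds c) :=
    hu_tend.comp (Filter.tendsto_sub_atTop_nat 1)
  have hlim : Filter.limsup (fun m => u (m - 1)) Filter.atTop = c :=
    hv_tend.limsup_eq
  rw [← hlim]
  refine Filter.limsup_le_limsup ?_
  filter_upwards [Filter.eventually_ge_atTop 1] with m hm
  have : m - 1 + 1 = m := Nat.succ_pred_eq_of_pos hm
  calc u (m - 1) ≤ h (i (m - 1 + 1)) := (hstep (m - 1)).2.le
    _ = h (i m) := by rw [this]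
end

section
/- Let n ≥ 1 and let A be an associative unital ℂ-algebra on which the standard polynomial of degree 2n vanishes identically, i.e. Σ_{σ ∈ Sym(2n)} sgn(σ) · a_{σ(1)} a_{σ(2)} ⋯ a_{σ(2n)} = 0 for all a₁, …, a_{2n} ∈ A. Then every simple (unital) A-module V that is finite-dimensional as a complex vector space satisfies dim_ℂ V ≤ n. -/
lemma staircase_nat (N : ℕ) (s : ℕ → ℕ)
    (hinj : ∀ a b, a < N → b < N → s a = s b → a = b)
    (hsurj : ∀ t, t < N → ∃ m, m < N ∧ s m = t)
    (hs : ∀ k, k < N → s k < N)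
    (hH : ∀ k, k + 1 < N → (s k + 1) / 2 = s (k + 1) / 2) :
    ∀ k, k < N → s k = k := by
  intro k
  induction k using Nat.strong_induction_on with
  | _ k ih =>
    intro hk
    match k, hk with
    | 0, hk =>
      obtain ⟨m, hmN, hsm⟩ := hsurj 0 hk
      rcases Nat.eq_zero_or_pos m with h0 | h0
      · subst h0; omega
      · exfalso
        obtain ⟨m', rfl⟩ : ∃ m', m = m' + 1 := ⟨m - 1, by omega⟩
        have h1 := hH m' hmN
        have h2 : s m' = 0 := by omega
        have := hinj m' (m' + 1) (by omega) hmN (by omega)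
        omega
    | (t+1), hk =>
      have hst : s t = t := ih t (by omega) (by omega)
      have h0 : s 0 = 0 := ih 0 (by omega) (by omega)
      have hHt := hH t hk
      have hlt := hs (t+1) hk
      have hne : s (t+1) ≠ t := fun h => by
        have := hinj (t+1) t hk (by omega) (by omega); omega
      rcases Nat.lt_or_ge (t+2) N with h2N | h2N
      · by_cases hcase : s (t+1) = t + 1
        · exact hcase
        · exfalso
          have het2 : s (t+1) = t + 2 := by omega
          obtain ⟨m, hmN, hsm⟩ := hsurj (t+1) (by omega)
          have hmne0 : m ≠ 0 := by intro h; subst h; omega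
          have hmnet1 : m ≠ t + 1 := by intro h; subst h; omega
          obtain ⟨m', rfl⟩ : ∃ m', m = m' + 1 := ⟨m - 1, by omega⟩
          have hHm := hH m' hmN
          -- (s m' + 1)/2 = (t+1)/2 with t+1 even (t odd from hHt & het2)
          have hm'ne : m' ≠ m' + 1 := by omega
          have h3 : s m' ≠ t + 1 := fun h => by
            have := hinj m' (m'+1) (by omega) hmN (by omega); omega
          have h4 : s m' = t := by omega
          have := hinj m' t (by omega) (by omega) (by omega)
          omega
      · omega

lemma staircase_perm_eq_one (n : ℕ) (σ : Equiv.Perm (Fin (2 * n)))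
    (H : ∀ k : ℕ, (hk : k + 1 < 2 * n) →
      (((σ ⟨k, Nat.lt_of_succ_lt hk⟩ : Fin (2*n)) : ℕ) + 1) / 2
        = ((σ ⟨k+1, hk⟩ : Fin (2*n)) : ℕ) / 2) :
    σ = 1 := by
  classical
  set s : ℕ → ℕ := fun k => if h : k < 2*n then ((σ ⟨k, h⟩ : Fin (2*n)) : ℕ) else 0 with hs
  have hval : ∀ (k : ℕ) (h : k < 2*n), s k = ((σ ⟨k, h⟩ : Fin (2*n)) : ℕ) := by
    intro k h; simp [hs, dif_pos h]
  have main := staircase_nat (2*n) s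
    (fun a b ha hb hab => by
      rw [hval a ha, hval b hb] at hab
      have := σ.injective (Fin.ext hab)
      simpa using this)
    (fun t ht => ⟨(σ.symm ⟨t, ht⟩ : Fin (2*n)), (σ.symm ⟨t, ht⟩).isLt, by
      rw [hval _ (σ.symm ⟨t, ht⟩).isLt]
      simp⟩)
    (fun k hk => by rw [hval k hk]; exact (σ ⟨k, hk⟩).isLt)
    (fun k hk => by
      rw [hval k (Nat.lt_of_succ_lt hk), hval (k+1) hk]
      exact H k hk)
  ext i
  have := main i.val i.isLt
  rw [hval i.val i.isLt] at this
  simpa using this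

open Matrix in
lemma prod_stdBasisMatrix_chain {d : ℕ} (x : Fin d × Fin d) (l : List (Fin d × Fin d))
    (h : List.Chain' (fun p q => p.2 = q.1) (x :: l)) :
    ((x :: l).map fun p => Matrix.single p.1 p.2 (1:ℂ)).prod
      = Matrix.single x.1 (((x :: l).getLast (by simp)).2) 1 := by
  induction l generalizing x with
  | nil => simp
  | cons y t ih =>
    have h1 : x.2 = y.1 := (List.isChain_cons_cons.mp h).1
    have h2 : List.Chain' (fun p q => p.2 = q.1) (y :: t) := (List.isChain_cons_cons.mp h).2
    rw [List.map_cons, List.prod_cons, ih y h2]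
    have h3 : ((x :: y :: t).getLast (by simp)) = ((y :: t).getLast (by simp)) :=
      List.getLast_cons (by simp)
    rw [h3, h1, Matrix.single_mul_single_same, one_mul]

open Matrix in
lemma prod_stdBasisMatrix_chain_ne {d : ℕ} (l : List (Fin d × Fin d)) (hl : l ≠ [])
    (h : List.Chain' (fun p q => p.2 = q.1) l) :
    (l.map fun p => Matrix.single p.1 p.2 (1:ℂ)).prod
      = Matrix.single (l.head hl).1 ((l.getLast hl).2) 1 := by
  obtain ⟨x, t, rfl⟩ := List.exists_cons_of_ne_nil hl
  simpa using prod_stdBasisMatrix_chain x t h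

open Matrix in
lemma prod_stdBasisMatrix_not_chain {d : ℕ} (l : List (Fin d × Fin d))
    (h : ¬ List.Chain' (fun p q => p.2 = q.1) l) :
    (l.map fun p => Matrix.single p.1 p.2 (1:ℂ)).prod = 0 := by
  induction l with
  | nil => exact absurd List.isChain_nil h
  | cons x l ih =>
    match l with
    | [] => exact absurd (List.isChain_singleton x) h
    | y :: t =>
      rw [List.map_cons, List.prod_cons]
      by_cases hc : List.Chain' (fun p q => p.2 = q.1) (y :: t)
      · have hxy : x.2 ≠ y.1 := fun hxy => h (List.isChain_cons_cons.mpr ⟨hxy, hc⟩)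
        rw [prod_stdBasisMatrix_chain y t hc]
        rw [Matrix.single_mul_single_of_ne _ _ _ _ hxy]
      · rw [ih hc, mul_zero]

section Density
variable {A : Type*} [Ring A] [Algebra ℂ A]
  {V : Type*} [AddCommGroup V] [Module A V] [Module ℂ V] [IsScalarTower ℂ A V]

lemma smul_comm'' (c : ℂ) (a : A) (x : V) : a • (c • x) = c • (a • x) := by
  rw [algebra_compatible_smul A c x, ← mul_smul, ← Algebra.commutes c a, mul_smul,
    ← algebra_compatible_smul A c (a • x)]

/-- Schur's lemma over ℂ -/
lemma schur_scalar [FiniteDimensional ℂ V] (hV : IsSimpleModule A V)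
    (f : V →ₗ[ℂ] V) (hf : ∀ (a : A) (x : V), f (a • x) = a • f x) :
    ∃ c : ℂ, ∀ x : V, f x = c • x := by
  haveI : Nontrivial V := IsSimpleModule.nontrivial A V
  obtain ⟨c, hc⟩ := Module.End.exists_eigenvalue (f : Module.End ℂ V)
  obtain ⟨v, hv⟩ := hc.exists_hasEigenvector
  refine ⟨c, ?_⟩
  set p : Submodule A V :=
    { carrier := {x | f x = c • x}
      add_mem' := fun hx hy => by
        simp only [Set.mem_setOf_eq] at *
        rw [map_add, hx, hy, smul_add]
      zero_mem' := by simp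
      smul_mem' := fun a x hx => by
        simp only [Set.mem_setOf_eq] at *
        rw [hf, hx, smul_comm''] } with hp
  have hvp : v ∈ p := hv.apply_eq_smul
  have : p = ⊤ := by
    rcases hV.toIsSimpleOrder.eq_bot_or_eq_top p with h | h
    · exfalso
      rw [h] at hvp
      exact hv.2 (by simpa using hvp)
    · exact h
  intro x
  have : x ∈ p := this ▸ Submodule.mem_top
  exact this

lemma density [FiniteDimensional ℂ V] (hV : IsSimpleModule A V) :
    ∀ (k : ℕ) (v : Fin k → V), LinearIndependent ℂ v →
      ∀ w : Fin k → V, ∃ a : A, ∀ i, a • v i = w i := by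
  intro k
  induction k with
  | zero => exact fun v _ w => ⟨1, fun i => i.elim0⟩
  | succ k ih =>
    intro v hv w
    have hv' : LinearIndependent ℂ (fun i : Fin k => v i.castSucc) :=
      hv.comp Fin.castSucc (Fin.castSucc_injective k)
    set U : Submodule A V :=
      { carrier := {x | ∃ a : A, (∀ i : Fin k, a • v i.castSucc = 0) ∧ a • v (Fin.last k) = x}
        add_mem' := by
          rintro x y ⟨a, ha1, ha2⟩ ⟨b, hb1, hb2⟩
          exact ⟨a + b, fun i => by rw [add_smul, ha1, hb1, add_zero],
            by rw [add_smul, ha2, hb2]⟩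
        zero_mem' := ⟨0, fun i => by rw [zero_smul], by rw [zero_smul]⟩
        smul_mem' := by
          rintro a x ⟨b, hb1, hb2⟩
          exact ⟨a * b, fun i => by rw [mul_smul, hb1, smul_zero],
            by rw [mul_smul, hb2]⟩ } with hU
    rcases hV.toIsSimpleOrder.eq_bot_or_eq_top U with hbot | htop
    · -- hard case : U = ⊥
      exfalso
      have key : ∀ a a' : A, (∀ i : Fin k, a • v i.castSucc = a' • v i.castSucc) →
          a • v (Fin.last k) = a' • v (Fin.last k) := by
        intro a a' h
        have : a • v (Fin.last k) - a' • v (Fin.last k) ∈ U :=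
          ⟨a - a', fun i => by rw [sub_smul, h i, sub_self], by rw [sub_smul]⟩
        rw [hbot] at this
        exact sub_eq_zero.mp ((Submodule.mem_bot A).mp this)
      -- build the commuting endomorphisms
      classical
      have exA : ∀ (j : Fin k) (x : V), ∃ a : A,
          ∀ i : Fin k, a • v i.castSucc = if i = j then x else 0 :=
        fun j x => ih (fun i => v i.castSucc) hv' (fun i => if i = j then x else 0)
      set g : Fin k → V → V := fun j x =>
        Classical.choose (exA j x) • v (Fin.last k) with hg
      have hspec : ∀ (j : Fin k) (x : V) (i : Fin k),
          Classical.choose (exA j x) • v i.castSucc = if i = j then x else 0 :=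
        fun j x => Classical.choose_spec (exA j x)
      have hgadd : ∀ (j : Fin k) (x y : V), g j (x + y) = g j x + g j y := by
        intro j x y
        have : (Classical.choose (exA j x) + Classical.choose (exA j y)) • v (Fin.last k)
            = g j (x + y) := by
          refine (key _ _ fun i => ?_).symm
          rw [add_smul, hspec, hspec, hspec]
          by_cases h : i = j <;> simp [h]
        rw [← this, add_smul]
      have hgsmul : ∀ (j : Fin k) (c : ℂ) (x : V), g j (c • x) = c • g j x := by
        intro j c x
        have : (c • Classical.choose (exA j x)) • v (Fin.last k) = g j (c • x) := by
          refine (key _ _ fun i => ?_).symm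
          rw [smul_assoc, hspec, hspec]
          by_cases h : i = j <;> simp [h]
        rw [← this, smul_assoc]
      have hgA : ∀ (j : Fin k) (b : A) (x : V), g j (b • x) = b • g j x := by
        intro j b x
        have : (b * Classical.choose (exA j x)) • v (Fin.last k) = g j (b • x) := by
          refine (key _ _ fun i => ?_).symm
          rw [mul_smul, hspec, hspec]
          by_cases h : i = j <;> simp [h]
        rw [← this, mul_smul]
      -- Schur gives scalars
      have hscal : ∀ j : Fin k, ∃ c : ℂ, ∀ x : V, g j x = c • x := by
        intro j
        exact schur_scalar hV
          { toFun := g j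
            map_add' := hgadd j
            map_smul' := hgsmul j } (hgA j)
      choose c hc using hscal
      -- now v (last) = ∑ c j • v j.castSucc
      have hsum : (∑ j : Fin k, Classical.choose (exA j (v j.castSucc))) • v (Fin.last k)
          = v (Fin.last k) := by
        have := key (∑ j : Fin k, Classical.choose (exA j (v j.castSucc))) 1 (fun i => by
          rw [Finset.sum_smul, one_smul]
          rw [Finset.sum_congr rfl (fun j _ => hspec j (v j.castSucc) i)]
          simp)
        rw [this, one_smul]
      have hsum2 : (∑ j : Fin k, Classical.choose (exA j (v j.castSucc))) • v (Fin.last k)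
          = ∑ j : Fin k, c j • v j.castSucc := by
        rw [Finset.sum_smul]
        exact Finset.sum_congr rfl fun j _ => hc j (v j.castSucc)
      have hdep : v (Fin.last k) = ∑ j : Fin k, c j • v j.castSucc := by
        rw [← hsum2, hsum]
      -- contradiction with linear independence
      set G : Fin (k+1) → ℂ := Fin.lastCases (-1) c with hG
      have hzero : ∑ i : Fin (k+1), G i • v i = 0 := by
        rw [Fin.sum_univ_castSucc]
        have h1 : G (Fin.last k) = -1 := by simp [hG]
        have h2 : ∀ j : Fin k, G j.castSucc = c j := fun j => by simp [hG]
        rw [h1]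
        rw [Finset.sum_congr rfl (fun j _ => by rw [h2 j])]
        rw [← hdep]
        simp
      have := Fintype.linearIndependent_iff.mp hv G hzero (Fin.last k)
      rw [hG] at this
      simp at this
    · -- easy case : U = ⊤
      obtain ⟨b, hb⟩ := ih (fun i => v i.castSucc) hv' (fun i => w i.castSucc)
      have : w (Fin.last k) - b • v (Fin.last k) ∈ U := htop ▸ Submodule.mem_top
      obtain ⟨c, hc1, hc2⟩ := this
      refine ⟨b + c, fun i => ?_⟩
      induction i using Fin.lastCases with
      | last => rw [add_smul, hc2]; abel
      | cast i => rw [add_smul, hb i, hc1 i, add_zero]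

end Density


/-- Let `n ≥ 1` and let `A` be an associative unital `ℂ`-algebra on which the
standard polynomial of degree `2n` vanishes identically.  Then every simple `A`-module that is
finite-dimensional over `ℂ` has `ℂ`-dimension at most `n`. -/
theorem simple_module_dim_le_of_standard_identity
    (n : ℕ) (hn : 1 ≤ n) (A : Type*) [Ring A] [Algebra ℂ A]
    (hA : ∀ a : Fin (2 * n) → A,
      ∑ σ : Equiv.Perm (Fin (2 * n)),
        (Equiv.Perm.sign σ : ℤ) • (List.ofFn fun i => a (σ i)).prod = 0)
    (V : Type*) [AddCommGroup V] [Module A V] [Module ℂ V] [IsScalarTower ℂ A V]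
    (hV : IsSimpleModule A V) [FiniteDimensional ℂ V] :
    Module.finrank ℂ V ≤ n := by
  classical
  by_contra hcon
  push_neg at hcon
  haveI : SMulCommClass A ℂ V := ⟨fun a c x => smul_comm'' c a x⟩
  set d := Module.finrank ℂ V with hd
  set bV : Module.Basis (Fin d) ℂ V := Module.finBasis ℂ V with hbV
  set ρ : A →ₐ[ℂ] Module.End ℂ V := Algebra.lsmul ℂ ℂ V with hρ
  have hsurj : ∀ T : Module.End ℂ V, ∃ a : A, ρ a = T := by
    intro T
    obtain ⟨a, ha⟩ := density hV d bV bV.linearIndependent (fun i => T (bV i))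
    exact ⟨a, bV.ext fun i => ha i⟩
  set e : Module.End ℂ V ≃ₐ[ℂ] Matrix (Fin d) (Fin d) ℂ :=
    LinearMap.toMatrixAlgEquiv bV with he
  set φ : A →ₐ[ℂ] Matrix (Fin d) (Fin d) ℂ := e.toAlgHom.comp ρ with hφ
  -- staircase matrix units
  set pr : Fin (2 * n) → Fin d × Fin d := fun i =>
    (⟨i.val / 2, by have := i.isLt; omega⟩, ⟨(i.val + 1) / 2, by have := i.isLt; omega⟩)
    with hpr
  set Ms : Fin (2 * n) → Matrix (Fin d) (Fin d) ℂ := fun i =>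
    Matrix.single (pr i).1 (pr i).2 1 with hMs
  have hpre : ∀ i, ∃ a : A, φ a = Ms i := by
    intro i
    obtain ⟨a, ha⟩ := hsurj (e.symm (Ms i))
    exact ⟨a, by rw [hφ]; simp [AlgHom.comp_apply, ha]⟩
  choose a ha using hpre
  have hzero : ∑ σ : Equiv.Perm (Fin (2 * n)),
      (Equiv.Perm.sign σ : ℤ) • (List.ofFn fun i => Ms (σ i)).prod = 0 := by
    have h0 := congrArg φ (hA a)
    rw [map_zero, map_sum] at h0
    rw [← h0]
    refine Finset.sum_congr rfl fun σ _ => ?_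
    rw [map_zsmul, map_list_prod, List.map_ofFn]
    have hfun : (⇑φ ∘ fun i => a (σ i)) = fun i => Ms (σ i) :=
      funext fun i => ha (σ i)
    rw [hfun]
  -- evaluate the sum
  have hn2 : 1 ≤ 2 * n := by omega
  have hval : ∑ σ : Equiv.Perm (Fin (2 * n)),
      (Equiv.Perm.sign σ : ℤ) • (List.ofFn fun i => Ms (σ i)).prod
      = Matrix.single (⟨0, by omega⟩ : Fin d) (⟨n, by omega⟩ : Fin d) (1 : ℂ) := by
    rw [Finset.sum_eq_single (1 : Equiv.Perm (Fin (2 * n)))]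
    · -- identity term
      simp only [Equiv.Perm.sign_one, Units.val_one, one_smul, Equiv.Perm.coe_one, id_eq]
      have hmap : (List.ofFn fun i => Ms i)
          = (List.ofFn pr).map (fun p => Matrix.single p.1 p.2 (1:ℂ)) := by
        rw [List.map_ofFn]; rfl
      have hne : List.ofFn pr ≠ [] := by
        simp only [ne_eq, List.ofFn_eq_nil_iff]; omega
      have hchain : List.Chain' (fun p q : Fin d × Fin d => p.2 = q.1) (List.ofFn pr) := by
        rw [List.Chain', List.isChain_ofFn]
        intro i hi
        simp only [hpr]
      rw [hmap, prod_stdBasisMatrix_chain_ne _ hne hchain, List.head_ofFn, List.getLast_ofFn]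
      simp only [hpr]
      exact congrArg₂ (fun p q => Matrix.single p q (1:ℂ))
        (Fin.ext (show (0:ℕ)/2 = 0 by omega))
        (Fin.ext (show (2*n - 1 + 1)/2 = n by omega))
    · intro σ _ hσ
      have hnotchain : ¬ List.Chain' (fun p q : Fin d × Fin d => p.2 = q.1)
          (List.ofFn fun i => pr (σ i)) := by
        intro hch
        apply hσ
        apply staircase_perm_eq_one n σ
        intro k hk
        rw [List.Chain', List.isChain_ofFn] at hch
        have := hch k hk
        simp only [hpr] at this
        exact congrArg Fin.val this
      have hmap : (List.ofFn fun i => Ms (σ i))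
          = (List.ofFn fun i => pr (σ i)).map (fun p => Matrix.single p.1 p.2 (1:ℂ)) := by
        rw [List.map_ofFn]; rfl
      rw [hmap, prod_stdBasisMatrix_not_chain _ hnotchain, smul_zero]
    · intro h; exact absurd (Finset.mem_univ _) h
  rw [hval] at hzero
  have := congrFun (congrFun hzero ⟨0, by omega⟩) ⟨n, by omega⟩
  rw [Matrix.single_apply_same] at this
  simp at this
end

section
/- Let S be a commutative unital ring whose additive group is torsion-free (this holds in particular when S = ℤ or S = ℤ_p, the p-adic integers), and let p be a prime. Then every element of finite order in the p-reduced Heisenberg group Hr_p(S) lies in the central subgroup K = {(0,0,[s]) : s ∈ S}. Consequently, every finite subgroup of Hr_p(S) is contained in K. -/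
/-- The Heisenberg group over a commutative unital ring `S`: the underlying set is
`S × S × S` with multiplication `(x,y,z)·(x',y',z') = (x+x', y+y', z+xy'+z')`. -/
@[ext]
structure Heis (S : Type*) [CommRing S] where
  x : S
  y : S
  z : S

namespace Heis

variable {S : Type*} [CommRing S]

instance : Mul (Heis S) := ⟨fun a b => ⟨a.x + b.x, a.y + b.y, a.z + a.x * b.y + b.z⟩⟩
instance : One (Heis S) := ⟨⟨0, 0, 0⟩⟩
instance : Inv (Heis S) := ⟨fun a => ⟨-a.x, -a.y, a.x * a.y - a.z⟩⟩

@[simp] lemma mul_x (a b : Heis S) : (a * b).x = a.x + b.x := rfl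
@[simp] lemma mul_y (a b : Heis S) : (a * b).y = a.y + b.y := rfl
@[simp] lemma mul_z (a b : Heis S) : (a * b).z = a.z + a.x * b.y + b.z := rfl
@[simp] lemma one_x : (1 : Heis S).x = 0 := rfl
@[simp] lemma one_y : (1 : Heis S).y = 0 := rfl
@[simp] lemma one_z : (1 : Heis S).z = 0 := rfl
@[simp] lemma inv_x (a : Heis S) : a⁻¹.x = -a.x := rfl
@[simp] lemma inv_y (a : Heis S) : a⁻¹.y = -a.y := rfl
@[simp] lemma inv_z (a : Heis S) : a⁻¹.z = a.x * a.y - a.z := rfl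

instance : Group (Heis S) where
  mul_assoc a b c := by ext <;> simp <;> ring
  one_mul a := by ext <;> simp
  mul_one a := by ext <;> simp
  inv_mul_cancel a := by ext <;> simp <;> ring

end Heis

/-- The central subgroup `{(0,0,ps) : s ∈ S}` of the Heisenberg group `H(S)`. -/
def pCenter (p : ℕ) (S : Type*) [CommRing S] : Subgroup (Heis S) where
  carrier := {a | a.x = 0 ∧ a.y = 0 ∧ ∃ s : S, a.z = p * s}
  mul_mem' := by
    rintro a b ⟨hax, hay, s, hs⟩ ⟨hbx, hby, t, ht⟩
    refine ⟨by rw [Heis.mul_x, hax, hbx, add_zero],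
      by rw [Heis.mul_y, hay, hby, add_zero], s + t, ?_⟩
    rw [Heis.mul_z, hs, ht, hax]; ring
  one_mem' := ⟨rfl, rfl, 0, by simp⟩
  inv_mem' := by
    rintro a ⟨hax, hay, s, hs⟩
    exact ⟨by rw [Heis.inv_x, hax, neg_zero], by rw [Heis.inv_y, hay, neg_zero],
      -s, by rw [Heis.inv_z, hax, hs]; ring⟩

instance pCenter.normal (p : ℕ) (S : Type*) [CommRing S] : (pCenter p S).Normal := by
  constructor
  intro n hn g
  obtain ⟨hx, hy, hz⟩ := hn
  have hgn : g * n * g⁻¹ = n := by ext <;> simp [hx, hy] <;> ring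
  rw [hgn]; exact ⟨hx, hy, hz⟩

/-- The `p`-reduced Heisenberg group over `S`: the quotient of `H(S)` by the central
subgroup `{(0,0,ps) : s ∈ S}`. -/
abbrev HrP (p : ℕ) (S : Type*) [CommRing S] : Type _ := Heis S ⧸ pCenter p S

/-- The subgroup `{(0,0,s) : s ∈ S}` of `H(S)`. -/
def zSubgroup (S : Type*) [CommRing S] : Subgroup (Heis S) where
  carrier := {a | a.x = 0 ∧ a.y = 0}
  mul_mem' := by
    rintro a b ⟨hax, hay⟩ ⟨hbx, hby⟩
    exact ⟨by rw [Heis.mul_x, hax, hbx, add_zero], by rw [Heis.mul_y, hay, hby, add_zero]⟩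
  one_mem' := ⟨rfl, rfl⟩
  inv_mem' := by
    rintro a ⟨hax, hay⟩
    exact ⟨by rw [Heis.inv_x, hax, neg_zero], by rw [Heis.inv_y, hay, neg_zero]⟩

/-- The subgroup `K = {(0,0,[s]) : s ∈ S}` of the `p`-reduced Heisenberg group `Hr_p(S)`. -/
def Ksub (p : ℕ) (S : Type*) [CommRing S] : Subgroup (HrP p S) :=
  (zSubgroup S).map (QuotientGroup.mk' (pCenter p S))

instance Ksub.normal (p : ℕ) (S : Type*) [CommRing S] : (Ksub p S).Normal := by
  constructor
  intro n hn g
  obtain ⟨a, ⟨hax, hay⟩, rfl⟩ := hn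
  obtain ⟨b, rfl⟩ := QuotientGroup.mk'_surjective (pCenter p S) g
  refine ⟨b * a * b⁻¹, ⟨?_, ?_⟩, by simp⟩
  · simp [hax]
  · simp [hay]

/-- Old Mathlib's `AddMonoid.IsTorsionFree` (removed since): no nonzero element has finite
additive order. -/
def AddMonoid.IsTorsionFree (G : Type*) [AddMonoid G] : Prop :=
  ∀ g : G, g ≠ 0 → ¬IsOfFinAddOrder g


lemma Heis.pow_x {S : Type*} [CommRing S] (a : Heis S) (n : ℕ) : (a ^ n).x = n • a.x := by
  induction n with
  | zero => simp
  | succ n ih => rw [pow_succ]; simp [ih, succ_nsmul]; push_cast; ring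

lemma Heis.pow_y {S : Type*} [CommRing S] (a : Heis S) (n : ℕ) : (a ^ n).y = n • a.y := by
  induction n with
  | zero => simp
  | succ n ih => rw [pow_succ]; simp [ih, succ_nsmul]; push_cast; ring

/-- If the additive group of `S` is torsion-free, then every element of finite
order of `Hr_p(S)` lies in the central subgroup `K = {(0,0,[s])}`; consequently every finite
subgroup of `Hr_p(S)` is contained in `K`. -/
theorem HrP_torsion_in_Ksub
    (p : ℕ) (hp : p.Prime) (S : Type*) [CommRing S]
    (hS : AddMonoid.IsTorsionFree S) :
    (∀ g : HrP p S, IsOfFinOrder g → g ∈ Ksub p S) ∧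
      (∀ F : Subgroup (HrP p S), Finite F → F ≤ Ksub p S) := by
  have main : ∀ g : HrP p S, IsOfFinOrder g → g ∈ Ksub p S := by
    intro g hg
    obtain ⟨a, rfl⟩ := QuotientGroup.mk'_surjective (pCenter p S) g
    obtain ⟨n, hn, hgn⟩ := hg.exists_pow_eq_one
    have hmem : a ^ n ∈ pCenter p S := by
      rw [← QuotientGroup.eq_one_iff (a ^ n)]
      simpa using hgn
    obtain ⟨hx, hy, -⟩ := hmem
    rw [Heis.pow_x] at hx
    rw [Heis.pow_y] at hy
    have hax : a.x = 0 := by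
      by_contra h
      exact hS a.x h (isOfFinAddOrder_iff_nsmul_eq_zero.mpr ⟨n, hn, hx⟩)
    have hay : a.y = 0 := by
      by_contra h
      exact hS a.y h (isOfFinAddOrder_iff_nsmul_eq_zero.mpr ⟨n, hn, hy⟩)
    exact ⟨a, ⟨hax, hay⟩, rfl⟩
  refine ⟨main, fun F hF g hg => ?_⟩
  have : IsOfFinOrder (⟨g, hg⟩ : F) := isOfFinOrder_of_finite _
  exact main g (F.subtype.isOfFinOrder this)
end

section
/- Let p be a prime. Every simple module over the complex group algebra ℂ[Hr_p(ℤ)] of the p-reduced integer Heisenberg group that is finite-dimensional as a complex vector space has ℂ-dimension equal to either 1 or p. -/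
namespace HeisAux

variable (p : ℕ)

/-- generator (1,0,0) -/
def aH : Heis ℤ := ⟨1, 0, 0⟩
/-- generator (0,1,0) -/
def bH : Heis ℤ := ⟨0, 1, 0⟩
/-- central element (0,0,1) -/
def cH : Heis ℤ := ⟨0, 0, 1⟩

lemma aH_zpow (n : ℤ) : aH ^ n = ⟨n, 0, 0⟩ := by
  induction n using Int.induction_on with
  | zero => rfl
  | succ k ih => rw [zpow_add_one, ih]; ext <;> simp [aH]
  | pred k ih => rw [zpow_sub_one, ih]; ext <;> simp [aH] <;> ring

lemma bH_zpow (n : ℤ) : bH ^ n = ⟨0, n, 0⟩ := by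
  induction n using Int.induction_on with
  | zero => rfl
  | succ k ih => rw [zpow_add_one, ih]; ext <;> simp [bH]
  | pred k ih => rw [zpow_sub_one, ih]; ext <;> simp [bH] <;> ring

lemma cH_zpow (n : ℤ) : cH ^ n = ⟨0, 0, n⟩ := by
  induction n using Int.induction_on with
  | zero => rfl
  | succ k ih => rw [zpow_add_one, ih]; ext <;> simp [cH]
  | pred k ih => rw [zpow_sub_one, ih]; ext <;> simp [cH] <;> ring

lemma cH_comm : cH = aH * bH * aH⁻¹ * bH⁻¹ := by
  ext <;> simp [aH, bH, cH]

lemma heis_decomp (g : Heis ℤ) :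
    g = aH ^ g.x * bH ^ g.y * cH ^ (g.z - g.x * g.y) := by
  rw [aH_zpow, bH_zpow, cH_zpow]; ext <;> simp <;> ring

lemma heis_closure (g : Heis ℤ) : g ∈ Subgroup.closure {aH, bH} := by
  have ha : aH ∈ Subgroup.closure {aH, bH} :=
    Subgroup.subset_closure (by simp)
  have hb : bH ∈ Subgroup.closure {aH, bH} :=
    Subgroup.subset_closure (by simp)
  have hc : cH ∈ Subgroup.closure {aH, bH} := by
    rw [cH_comm]
    exact Subgroup.mul_mem _ (Subgroup.mul_mem _ (Subgroup.mul_mem _ ha hb)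
      (Subgroup.inv_mem _ ha)) (Subgroup.inv_mem _ hb)
  rw [heis_decomp g]
  exact Subgroup.mul_mem _ (Subgroup.mul_mem _ (Subgroup.zpow_mem _ ha _)
    (Subgroup.zpow_mem _ hb _)) (Subgroup.zpow_mem _ hc _)

/-- the three distinguished elements of the quotient -/
def aG : HrP p ℤ := QuotientGroup.mk aH
def bG : HrP p ℤ := QuotientGroup.mk bH
def cG : HrP p ℤ := QuotientGroup.mk cH

lemma G_closure (g : HrP p ℤ) : g ∈ Subgroup.closure {aG p, bG p} := by
  obtain ⟨h, rfl⟩ := QuotientGroup.mk'_surjective (pCenter p ℤ) g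
  have : (QuotientGroup.mk' (pCenter p ℤ)) '' {aH, bH} = {aG p, bG p} := by
    simp [Set.image_insert_eq, aG, bG]
  rw [← this, ← MonoidHom.map_closure]
  exact ⟨h, heis_closure h, rfl⟩

lemma cG_central (g : HrP p ℤ) : cG p * g = g * cG p := by
  obtain ⟨h, rfl⟩ := QuotientGroup.mk'_surjective (pCenter p ℤ) g
  show QuotientGroup.mk (cH * h) = QuotientGroup.mk (h * cH)
  congr 1
  ext <;> simp [cH] <;> ring

lemma cG_pow_p : cG p ^ p = 1 := by
  have hc : cH ^ p = ⟨0, 0, (p : ℤ)⟩ := by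
    have := cH_zpow p; rwa [zpow_natCast] at this
  show (QuotientGroup.mk cH : HrP p ℤ) ^ p = 1
  rw [← QuotientGroup.mk_pow, ← QuotientGroup.mk_one, QuotientGroup.eq]
  have key : (cH ^ p)⁻¹ * 1 = (⟨0, 0, -(p : ℤ)⟩ : Heis ℤ) := by
    rw [hc]; ext <;> simp
  rw [key]
  exact ⟨rfl, rfl, -1, by simp⟩

lemma comm_rel : aG p * bG p = cG p * (bG p * aG p) := by
  show QuotientGroup.mk (aH * bH) = QuotientGroup.mk (cH * (bH * aH))
  have : aH * bH = cH * (bH * aH) := by ext <;> simp [aH, bH, cH]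
  rw [this]

lemma bG_pow_central (g : HrP p ℤ) : bG p ^ p * g = g * bG p ^ p := by
  obtain ⟨h, rfl⟩ := QuotientGroup.mk'_surjective (pCenter p ℤ) g
  have hb : bH ^ (p:ℤ) = ⟨0, (p:ℤ), 0⟩ := bH_zpow p
  rw [zpow_natCast] at hb
  show QuotientGroup.mk (bH ^ p * h) = QuotientGroup.mk (h * bH ^ p)
  rw [QuotientGroup.eq]
  have key : (bH ^ p * h)⁻¹ * (h * bH ^ p) = (⟨0, 0, (p : ℤ) * h.x⟩ : Heis ℤ) := by
    rw [hb]; ext <;> simp <;> ring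
  rw [key]
  exact ⟨rfl, rfl, h.x, rfl⟩

end HeisAux
namespace HeisAux

section Rep

variable {p : ℕ} {V : Type*} [AddCommGroup V]
  [Module (MonoidAlgebra ℂ (HrP p ℤ)) V] [Module ℂ V]
  [IsScalarTower ℂ (MonoidAlgebra ℂ (HrP p ℤ)) V]

local notation "G" => HrP p ℤ
local notation "A" => MonoidAlgebra ℂ (HrP p ℤ)

lemma algSmul_comm (r : ℂ) (x : A) (v : V) : x • r • v = r • x • v := by
  rw [← IsScalarTower.algebraMap_smul (A) r v, ← mul_smul,
    ← Algebra.commutes r x, mul_smul, IsScalarTower.algebraMap_smul]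

/-- The action of a group element as a `ℂ`-linear endomorphism. -/
noncomputable def pi (g : G) : V →ₗ[ℂ] V where
  toFun v := MonoidAlgebra.of ℂ (HrP p ℤ) g • v
  map_add' u v := smul_add _ u v
  map_smul' r v := algSmul_comm r _ v

lemma pi_mul (g h : G) : (pi (p := p) (V := V) (g * h)) = pi g ∘ₗ pi h := by
  ext v
  show MonoidAlgebra.of ℂ (HrP p ℤ) (g * h) • v = _
  rw [map_mul, mul_smul]; rfl

lemma pi_one : (pi (p := p) (V := V) 1) = LinearMap.id := by
  ext v
  show MonoidAlgebra.of ℂ (HrP p ℤ) 1 • v = v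
  rw [map_one, MonoidAlgebra.one_def]
  show ((1 : A)) • v = v
  rw [one_smul]

lemma pi_mul_apply (g h : G) (v : V) :
    pi (p := p) (V := V) (g * h) v = pi g (pi h v) := by rw [pi_mul]; rfl

lemma pi_inv_comp (g : G) : pi (p := p) (V := V) g⁻¹ ∘ₗ pi g = LinearMap.id := by
  rw [← pi_mul, inv_mul_cancel, pi_one]

lemma pi_comp_inv (g : G) : pi (p := p) (V := V) g ∘ₗ pi g⁻¹ = LinearMap.id := by
  rw [← pi_mul, mul_inv_cancel, pi_one]

lemma pi_injective (g : G) : Function.Injective (pi (p := p) (V := V) g) := by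
  intro u v huv
  have := congrArg (pi (p := p) (V := V) g⁻¹) huv
  rwa [← LinearMap.comp_apply, ← LinearMap.comp_apply, pi_inv_comp] at this

/-- If a `ℂ`-linear map commutes with all group elements it commutes with the whole
group-algebra action. -/
lemma algebra_comm (T : V →ₗ[ℂ] V)
    (hT : ∀ g : G, ∀ v : V, T (pi g v) = pi g (T v)) (r : A) (v : V) :
    T (r • v) = r • T v := by
  induction r using MonoidAlgebra.induction_on with
  | of g => exact hT g v
  | add f g hf hg => rw [add_smul, add_smul, map_add, hf, hg]
  | smul c f hf => rw [smul_assoc, map_smul, hf, smul_assoc]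

/-- Schur's lemma step: a `ℂ`-linear endomorphism commuting with the action is a scalar. -/
lemma schur (hsimple : IsSimpleModule (A) V) (hfd : FiniteDimensional ℂ V)
    (T : V →ₗ[ℂ] V)
    (hT : ∀ g : G, ∀ v : V, T (pi g v) = pi g (T v)) :
    ∃ μ : ℂ, T = μ • LinearMap.id := by
  have : Nontrivial V := IsSimpleModule.nontrivial (A) V
  obtain ⟨μ, hμ⟩ := Module.End.exists_eigenvalue (T : Module.End ℂ V)
  refine ⟨μ, ?_⟩
  set S : Submodule (A) V :=
    { carrier := {v | T v = μ • v}
      add_mem' := by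
        intro u v hu hv
        simp only [Set.mem_setOf_eq, map_add] at *
        rw [hu, hv, smul_add]
      zero_mem' := by simp
      smul_mem' := by
        intro r v hv
        simp only [Set.mem_setOf_eq] at *
        rw [algebra_comm T hT, hv, algSmul_comm] } with hS
  have hne : S ≠ ⊥ := by
    obtain ⟨v, hv⟩ := hμ.exists_hasEigenvector
    intro hbot
    have : v ∈ S := hv.apply_eq_smul
    rw [hbot] at this
    exact hv.right (by simpa using this)
  have htop : S = ⊤ := (hsimple.eq_bot_or_eq_top S).resolve_left hne
  ext v
  have : v ∈ S := htop ▸ Submodule.mem_top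
  exact this

end Rep

end HeisAux
namespace HeisAux

section Rep2

variable {p : ℕ} {V : Type*} [AddCommGroup V]
  [Module (MonoidAlgebra ℂ (HrP p ℤ)) V] [Module ℂ V]
  [IsScalarTower ℂ (MonoidAlgebra ℂ (HrP p ℤ)) V]

local notation "G" => HrP p ℤ
local notation "A" => MonoidAlgebra ℂ (HrP p ℤ)

lemma pi_pow (g : G) (n : ℕ) :
    pi (p := p) (V := V) (g ^ n) = (pi g) ^ n := by
  induction n with
  | zero => rw [pow_zero, pow_zero]; exact pi_one
  | succ k ih => rw [pow_succ, pi_mul, ih, pow_succ, Module.End.mul_eq_comp]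

lemma pi_mul' (g h : G) :
    pi (p := p) (V := V) (g * h) = pi g * pi h := by
  rw [pi_mul, Module.End.mul_eq_comp]

lemma commute_inv_right {X : V →ₗ[ℂ] V} {h : G}
    (hc : Commute X (pi (p := p) h)) : Commute X (pi (p := p) h⁻¹) := by
  have h1 : pi (p := p) (V := V) h⁻¹ * pi h = 1 := by
    rw [Module.End.mul_eq_comp, pi_inv_comp]; rfl
  have h2 : pi (p := p) (V := V) h * pi h⁻¹ = 1 := by
    rw [Module.End.mul_eq_comp, pi_comp_inv]; rfl
  show X * pi (p := p) h⁻¹ = pi (p := p) h⁻¹ * X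
  calc X * pi (p := p) h⁻¹ = pi (p := p) h⁻¹ * (pi h * X) * pi h⁻¹ := by
        rw [← mul_assoc, h1, one_mul]
    _ = pi (p := p) h⁻¹ * (X * pi h) * pi h⁻¹ := by rw [hc.eq]
    _ = pi (p := p) h⁻¹ * X * (pi h * pi h⁻¹) := by simp [mul_assoc]
    _ = pi (p := p) h⁻¹ * X := by rw [h2, mul_one]

/-- The set of elements whose action commutes with a fixed operator is a subgroup. -/
def commSubgroup (X : V →ₗ[ℂ] V)
    (hX : ∀ g : G, Commute X (pi (p := p) g) → Commute X (pi (p := p) g)) :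
    Subgroup G where
  carrier := {g | Commute X (pi (p := p) g)}
  one_mem' := by
    have : pi (p := p) (V := V) (1 : G) = 1 := by
      rw [pi_one]; rfl
    simp only [Set.mem_setOf_eq, this]
    exact Commute.one_right X
  mul_mem' := by
    intro g h hg hh
    simp only [Set.mem_setOf_eq] at *
    rw [pi_mul']
    exact hg.mul_right hh
  inv_mem' := by
    intro g hg
    exact commute_inv_right hg

lemma commute_of_gen (X : V →ₗ[ℂ] V)
    (ha : Commute X (pi (p := p) (aG p))) (hb : Commute X (pi (p := p) (bG p)))
    (g : G) : Commute X (pi (p := p) g) := by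
  have hle : Subgroup.closure {aG p, bG p} ≤ commSubgroup X (fun _ h => h) := by
    rw [Subgroup.closure_le]
    rintro x (rfl | rfl)
    · exact ha
    · exact hb
  exact hle (G_closure p g)

lemma submodule_stable (W : Submodule ℂ V)
    (hW : ∀ g : G, ∀ w ∈ W, pi (p := p) g w ∈ W) (r : A) :
    ∀ w ∈ W, r • w ∈ W := by
  induction r using MonoidAlgebra.induction_on with
  | of g => exact fun w hw => hW g w hw
  | add f g hf hg =>
    intro w hw
    rw [add_smul]
    exact W.add_mem (hf w hw) (hg w hw)
  | smul c f hf =>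
    intro w hw
    rw [smul_assoc]
    exact W.smul_mem c (hf w hw)

lemma stable_to_top (hsimple : IsSimpleModule (A) V) (W : Submodule ℂ V)
    (hW : ∀ g : G, ∀ w ∈ W, pi (p := p) g w ∈ W) (hne : W ≠ ⊥) : W = ⊤ := by
  set S : Submodule (A) V :=
    { carrier := W
      add_mem' := fun ha hb => W.add_mem ha hb
      zero_mem' := W.zero_mem
      smul_mem' := fun r w hw => submodule_stable W hW r w hw } with hSdef
  have hSne : S ≠ ⊥ := by
    obtain ⟨x, hxW, hx0⟩ := Submodule.ne_bot_iff W |>.mp hne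
    intro hbot
    have : x ∈ S := hxW
    rw [hbot] at this
    exact hx0 (by simpa using this)
  have : S = ⊤ := (hsimple.eq_bot_or_eq_top S).resolve_left hSne
  rw [eq_top_iff]
  intro v _
  have : v ∈ S := this ▸ Submodule.mem_top
  exact this

lemma stable_inv (hfd : FiniteDimensional ℂ V) (W : Submodule ℂ V) (g : G)
    (h : ∀ w ∈ W, pi (p := p) g w ∈ W) : ∀ w ∈ W, pi (p := p) g⁻¹ w ∈ W := by
  have hle : W.map (pi (p := p) g) ≤ W := by
    rintro _ ⟨w, hw, rfl⟩
    exact h w hw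
  have heq : W.map (pi (p := p) g) = W := by
    apply Submodule.eq_of_le_of_finrank_le hle
    exact (LinearEquiv.finrank_eq
      (Submodule.equivMapOfInjective _ (pi_injective g) W)).le
  intro w hw
  rw [← heq] at hw
  obtain ⟨u, hu, rfl⟩ := hw
  have : pi (p := p) g⁻¹ (pi g u) = u := by
    rw [← LinearMap.comp_apply, pi_inv_comp]; rfl
  rwa [this]

lemma stable_of_gen (hfd : FiniteDimensional ℂ V) (W : Submodule ℂ V)
    (ha : ∀ w ∈ W, pi (p := p) (aG p) w ∈ W)
    (hb : ∀ w ∈ W, pi (p := p) (bG p) w ∈ W) :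
    ∀ g : G, ∀ w ∈ W, pi (p := p) g w ∈ W := by
  set St : Subgroup G :=
    { carrier := {g | ∀ w ∈ W, pi (p := p) g w ∈ W}
      one_mem' := by
        intro w hw
        have : pi (p := p) (V := V) (1 : G) w = w := by rw [pi_one]; rfl
        rwa [this]
      mul_mem' := by
        intro g h hg hh w hw
        rw [pi_mul_apply]
        exact hg _ (hh w hw)
      inv_mem' := fun {g} hg => stable_inv hfd W g hg } with hSt
  intro g
  have hle : Subgroup.closure {aG p, bG p} ≤ St := by
    rw [Subgroup.closure_le]
    rintro x (rfl | rfl)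
    · exact ha
    · exact hb
  exact hle (G_closure p g)

end Rep2

end HeisAux
open HeisAux in
/-- Every finite-dimensional simple module over the complex group algebra of
the `p`-reduced integer Heisenberg group `Hr_p(ℤ)` has `ℂ`-dimension `1` or `p`. -/
theorem HrP_int_irreducible_dim_one_or_p
    (p : ℕ) (hp : p.Prime)
    (V : Type*) [AddCommGroup V]
    [Module (MonoidAlgebra ℂ (HrP p ℤ)) V]
    [Module ℂ V] [IsScalarTower ℂ (MonoidAlgebra ℂ (HrP p ℤ)) V]
    (hsimple : IsSimpleModule (MonoidAlgebra ℂ (HrP p ℤ)) V)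
    (hfd : FiniteDimensional ℂ V) :
    Module.finrank ℂ V = 1 ∨ Module.finrank ℂ V = p := by
  classical
  have hnt : Nontrivial V := IsSimpleModule.nontrivial (MonoidAlgebra ℂ (HrP p ℤ)) V
  -- the central element acts as a scalar ω
  have hccomm : ∀ g : HrP p ℤ, ∀ v : V,
      pi (cG p) (pi g v) = pi g (pi (cG p) v) := by
    intro g v
    rw [← pi_mul_apply, ← pi_mul_apply, cG_central]
  obtain ⟨ω, hω⟩ := schur hsimple hfd (pi (cG p)) hccomm
  have hωv : ∀ v : V, pi (cG p) v = ω • v := by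
    intro v; rw [hω]; rfl
  obtain ⟨v0, hv0⟩ := exists_ne (0 : V)
  have hωp : ω ^ p = 1 := by
    have h1 : (pi (p := p) (V := V) (cG p)) ^ p = LinearMap.id := by
      rw [← pi_pow, cG_pow_p, pi_one]
    have h2 : (pi (p := p) (V := V) (cG p)) ^ p = ω ^ p • LinearMap.id := by
      have : (LinearMap.id : V →ₗ[ℂ] V) = 1 := rfl
      rw [hω, this, smul_pow, one_pow]
    rw [h1] at h2
    have h3 : v0 = ω ^ p • v0 := by
      conv_lhs => rw [show v0 = (LinearMap.id : V →ₗ[ℂ] V) v0 from rfl, h2]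
      rfl
    by_contra hne
    have : (ω ^ p - 1) • v0 = 0 := by
      rw [sub_smul, one_smul, ← h3, sub_self]
    rcases smul_eq_zero.mp this with h | h
    · exact hne (by linear_combination h)
    · exact hv0 h
  rcases eq_or_ne ω 1 with hω1 | hω1
  · -- abelian case : dimension 1
    left
    have hcid : ∀ v : V, pi (cG p) v = v := by
      intro v; rw [hωv, hω1, one_smul]
    have hab : Commute (pi (p := p) (V := V) (aG p)) (pi (bG p)) := by
      show pi (p := p) (V := V) (aG p) * pi (bG p) = pi (bG p) * pi (aG p)
      ext v
      have h1 : pi (p := p) (V := V) (aG p * bG p) v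
          = pi (cG p) (pi (bG p * aG p) v) := by
        rw [← pi_mul_apply, ← comm_rel]
      rw [pi_mul_apply, pi_mul_apply, hcid] at h1
      simpa [Module.End.mul_apply] using h1
    have hga : ∀ h, Commute (pi (p := p) (V := V) (aG p)) (pi h) :=
      fun h => commute_of_gen _ (Commute.refl _) hab h
    have hgb : ∀ h, Commute (pi (p := p) (V := V) (bG p)) (pi h) :=
      fun h => commute_of_gen _ hab.symm (Commute.refl _) h
    have hall : ∀ g h, Commute (pi (p := p) (V := V) g) (pi h) :=
      fun g h => commute_of_gen _ (hga g).symm (hgb g).symm h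
    have hscal : ∀ g : HrP p ℤ, ∃ μ : ℂ, pi (p := p) (V := V) g = μ • LinearMap.id := by
      intro g
      refine schur hsimple hfd (pi g) ?_
      intro h v
      simpa [Module.End.mul_apply] using congrArg (fun T : V →ₗ[ℂ] V => T v) (hall g h).eq
    set W : Submodule ℂ V := ℂ ∙ v0 with hWdef
    have hst : ∀ g : HrP p ℤ, ∀ w ∈ W, pi g w ∈ W := by
      intro g w hw
      obtain ⟨μ, hμ⟩ := hscal g
      rw [hμ]
      exact W.smul_mem μ hw
    have hne : W ≠ ⊥ :=
      Submodule.ne_bot_iff W |>.mpr ⟨v0, Submodule.mem_span_singleton_self v0, hv0⟩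
    have htop := stable_to_top hsimple W hst hne
    have : Module.finrank ℂ W = 1 := finrank_span_singleton hv0
    rw [htop] at this
    simpa using this
  · -- nonabelian case : dimension p
    right
    have horder : orderOf ω = p := by
      rcases (Nat.Prime.eq_one_or_self_of_dvd hp _ (orderOf_dvd_of_pow_eq_one hωp)) with h | h
      · exact absurd (orderOf_eq_one_iff.mp h) hω1
      · exact h
    obtain ⟨lam, hlam⟩ := Module.End.exists_eigenvalue
      (pi (p := p) (V := V) (aG p) : Module.End ℂ V)
    obtain ⟨v, hv⟩ := hlam.exists_hasEigenvector
    have hva : pi (p := p) (V := V) (aG p) v = lam • v := hv.apply_eq_smul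
    have hlam0 : lam ≠ 0 := by
      intro h
      apply hv.right
      apply pi_injective (aG p)
      rw [hva, h, zero_smul, map_zero]
    have hrel : ∀ w : V, pi (p := p) (aG p) (pi (bG p) w)
        = ω • pi (bG p) (pi (aG p) w) := by
      intro w
      have h1 : pi (p := p) (V := V) (aG p * bG p) w
          = pi (cG p) (pi (bG p * aG p) w) := by
        rw [← pi_mul_apply, ← comm_rel]
      rw [pi_mul_apply, pi_mul_apply, hωv] at h1
      rw [h1]
    set f : ℕ → V := fun k => ((pi (p := p) (V := V) (bG p)) ^ k) v with hfdef
    have hf0 : f 0 = v := rfl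
    have hfsucc : ∀ k, f (k + 1) = pi (bG p) (f k) := by
      intro k
      show ((pi (p := p) (V := V) (bG p)) ^ (k+1)) v = _
      rw [pow_succ']
      rfl
    have heig : ∀ k, pi (p := p) (aG p) (f k) = (ω ^ k * lam) • f k := by
      intro k
      induction k with
      | zero => simpa [hf0] using hva
      | succ n ih =>
        rw [hfsucc, hrel, ih, map_smul, smul_smul]
        ring_nf
    have hfne : ∀ k, f k ≠ 0 := by
      intro k h
      apply hv.right
      apply pi_injective (bG p ^ k)
      rw [map_zero, pi_pow]
      exact h
    -- b^p acts as a scalar β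
    have hbpcomm : ∀ g : HrP p ℤ, ∀ w : V,
        pi (bG p ^ p) (pi g w) = pi g (pi (bG p ^ p) w) := by
      intro g w
      rw [← pi_mul_apply, ← pi_mul_apply, bG_pow_central]
    obtain ⟨β, hβ⟩ := schur hsimple hfd (pi (bG p ^ p)) hbpcomm
    have hfp : f p = β • v := by
      show ((pi (p := p) (V := V) (bG p)) ^ p) v = β • v
      rw [← pi_pow, hβ]
      rfl
    set W : Submodule ℂ V := Submodule.span ℂ (Set.range fun k : Fin p => f k) with hWdef
    have hmemW : ∀ k : Fin p, f k ∈ W := fun k => Submodule.subset_span ⟨k, rfl⟩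
    have hmemW' : ∀ k, k < p → f k ∈ W := fun k hk => hmemW ⟨k, hk⟩
    have ha_st : ∀ w ∈ W, pi (p := p) (aG p) w ∈ W := by
      intro w hw
      induction hw using Submodule.span_induction with
      | mem x hx =>
        obtain ⟨k, rfl⟩ := hx
        rw [heig]
        exact W.smul_mem _ (hmemW k)
      | zero => rw [map_zero]; exact W.zero_mem
      | add x y _ _ hx hy => rw [map_add]; exact W.add_mem hx hy
      | smul c x _ hx => rw [map_smul]; exact W.smul_mem c hx
    have hb_st : ∀ w ∈ W, pi (p := p) (bG p) w ∈ W := by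
      intro w hw
      induction hw using Submodule.span_induction with
      | mem x hx =>
        obtain ⟨k, rfl⟩ := hx
        rw [← hfsucc]
        by_cases h : (k : ℕ) + 1 < p
        · exact hmemW' _ h
        · have hkp : (k : ℕ) + 1 = p := by omega
          rw [hkp, hfp]
          exact W.smul_mem β (by simpa [hf0] using hmemW' 0 hp.pos)
      | zero => rw [map_zero]; exact W.zero_mem
      | add x y _ _ hx hy => rw [map_add]; exact W.add_mem hx hy
      | smul c x _ hx => rw [map_smul]; exact W.smul_mem c hx
    have hstab := stable_of_gen hfd W ha_st hb_st
    have hWne : W ≠ ⊥ := by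
      refine Submodule.ne_bot_iff W |>.mpr ⟨v, ?_, hv.right⟩
      simpa [hf0] using hmemW' 0 hp.pos
    have htop := stable_to_top hsimple W hstab hWne
    -- linear independence of the f k
    have hinj : Function.Injective fun k : Fin p => ω ^ (k : ℕ) * lam := by
      intro i j hij
      have h1 : ω ^ (i : ℕ) = ω ^ (j : ℕ) := mul_right_cancel₀ hlam0 hij
      have h2 := pow_injOn_Iio_orderOf (x := ω)
        (by rw [horder]; exact Set.mem_Iio.mpr i.isLt)
        (by rw [horder]; exact Set.mem_Iio.mpr j.isLt) h1
      exact Fin.ext h2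
    have heigvec : ∀ k : Fin p,
        Module.End.HasEigenvector (pi (p := p) (V := V) (aG p) : Module.End ℂ V)
          (ω ^ (k : ℕ) * lam) (f k) :=
      fun k => ⟨Module.End.mem_eigenspace_iff.mpr (heig k), hfne k⟩
    have hind : LinearIndependent ℂ (fun k : Fin p => f k) :=
      Module.End.eigenvectors_linearIndependent'
        (pi (p := p) (V := V) (aG p) : Module.End ℂ V) _ hinj _ heigvec
    have hspan : ⊤ ≤ Submodule.span ℂ (Set.range fun k : Fin p => f k) := by
      rw [← hWdef, htop]
    let B : Module.Basis (Fin p) ℂ V := Module.Basis.mk hind hspan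
    rw [Module.finrank_eq_card_basis B, Fintype.card_fin]
end

section
/- Let (I, ≤) be a directed partial order, and let (G_i)_{i ∈ I} be an inverse system of finite groups, each equipped with the discrete topology, with transition homomorphisms q_{ij} : G_j → G_i for i ≤ j satisfying q_{ii} = id and q_{ij} ∘ q_{jk} = q_{ik} for i ≤ j ≤ k. Let G = { x ∈ ∏_{i ∈ I} G_i : q_{ij}(x_j) = x_i for all i ≤ j }, a closed subgroup of the product with the subspace topology, and let Q_i : G → G_i denote the i-th coordinate projection. Then the set ⋃_{i ∈ I} { f ∘ Q_i : f a function G_i → ℂ } is a subalgebra of the algebra C(G, ℂ) of continuous complex-valued functions on G, closed under complex conjugation, and it is dense in C(G, ℂ) with respect to the supremum norm. -/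
/-- Let `G = varprojlim G_i` be the inverse limit of an inverse system of
finite discrete groups over a directed index set, realized inside the product `∏ i, G_i` with
the subspace topology, with coordinate projections `Q_i`.  Then the set of continuous
functions on `G` of the form `f ∘ Q_i` is a subalgebra of `C(G, ℂ)` closed under complex
conjugation, and it is dense in `C(G, ℂ)` with respect to the supremum norm (the compact-open
topology on the compact space `G`). -/
theorem inverse_limit_cylinder_functions_dense
    (I : Type*) [PartialOrder I] [Nonempty I] [IsDirected I (· ≤ ·)]
    (Gi : I → Type*) [∀ i, Group (Gi i)] [∀ i, Finite (Gi i)]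
    [∀ i, TopologicalSpace (Gi i)] [∀ i, DiscreteTopology (Gi i)]
    (q : ∀ i j : I, i ≤ j → (Gi j →* Gi i))
    (hq_id : ∀ (i : I) (h : i ≤ i), q i i h = MonoidHom.id (Gi i))
    (hq_comp : ∀ (i j k : I) (hij : i ≤ j) (hjk : j ≤ k),
      (q i j hij).comp (q j k hjk) = q i k (hij.trans hjk))
    (𝒜 : Set C({x : ∀ i, Gi i // ∀ (i j : I) (h : i ≤ j), q i j h (x j) = x i}, ℂ))
    (h𝒜 : 𝒜 = {F | ∃ (i : I) (f : Gi i → ℂ), ∀ x, F x = f (x.val i)}) :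
    (∃ A : Subalgebra ℂ
        C({x : ∀ i, Gi i // ∀ (i j : I) (h : i ≤ j), q i j h (x j) = x i}, ℂ),
      (A : Set _) = 𝒜) ∧
      (∀ F ∈ 𝒜, star F ∈ 𝒜) ∧
      Dense 𝒜 := by
  classical
  subst h𝒜
  set G := {x : ∀ i, Gi i // ∀ (i j : I) (h : i ≤ j), q i j h (x j) = x i} with hG
  -- The subalgebra
  have hmul : ∀ F₁ F₂ : C(G, ℂ),
      F₁ ∈ {F : C(G, ℂ) | ∃ (i : I) (f : Gi i → ℂ), ∀ x, F x = f (x.val i)} →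
      F₂ ∈ {F : C(G, ℂ) | ∃ (i : I) (f : Gi i → ℂ), ∀ x, F x = f (x.val i)} →
      F₁ * F₂ ∈ {F : C(G, ℂ) | ∃ (i : I) (f : Gi i → ℂ), ∀ x, F x = f (x.val i)} := by
    rintro F₁ F₂ ⟨i, f, hf⟩ ⟨j, g, hg⟩
    obtain ⟨k, hik, hjk⟩ := directed_of (· ≤ ·) i j
    refine ⟨k, fun z => f (q i k hik z) * g (q j k hjk z), fun x => ?_⟩
    simp [hf, hg, ← x.prop i k hik, ← x.prop j k hjk]
  have hadd : ∀ F₁ F₂ : C(G, ℂ),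
      F₁ ∈ {F : C(G, ℂ) | ∃ (i : I) (f : Gi i → ℂ), ∀ x, F x = f (x.val i)} →
      F₂ ∈ {F : C(G, ℂ) | ∃ (i : I) (f : Gi i → ℂ), ∀ x, F x = f (x.val i)} →
      F₁ + F₂ ∈ {F : C(G, ℂ) | ∃ (i : I) (f : Gi i → ℂ), ∀ x, F x = f (x.val i)} := by
    rintro F₁ F₂ ⟨i, f, hf⟩ ⟨j, g, hg⟩
    obtain ⟨k, hik, hjk⟩ := directed_of (· ≤ ·) i j
    refine ⟨k, fun z => f (q i k hik z) + g (q j k hjk z), fun x => ?_⟩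
    simp [hf, hg, ← x.prop i k hik, ← x.prop j k hjk]
  have halg : ∀ r : ℂ, (algebraMap ℂ C(G, ℂ)) r ∈
      {F : C(G, ℂ) | ∃ (i : I) (f : Gi i → ℂ), ∀ x, F x = f (x.val i)} := by
    intro r
    exact ⟨Classical.arbitrary I, fun _ => r, fun x => rfl⟩
  let A : Subalgebra ℂ C(G, ℂ) :=
    { carrier := {F : C(G, ℂ) | ∃ (i : I) (f : Gi i → ℂ), ∀ x, F x = f (x.val i)}
      mul_mem' := fun {a b} ha hb => hmul a b ha hb
      add_mem' := fun {a b} ha hb => hadd a b ha hb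
      algebraMap_mem' := halg }
  have hstar : ∀ F ∈ A, star F ∈ A := by
    rintro F ⟨i, f, hf⟩
    exact ⟨i, fun z => star (f z), fun x => by simp [hf]⟩
  refine ⟨⟨A, rfl⟩, hstar, ?_⟩
  -- compactness of G
  haveI : ∀ i, CompactSpace (Gi i) := fun i => Finite.compactSpace
  haveI : CompactSpace G := by
    have hcl : IsClosed {x : ∀ i, Gi i | ∀ (i j : I) (h : i ≤ j), q i j h (x j) = x i} := ?_
    · exact isCompact_iff_compactSpace.mp hcl.isCompact
    have : {x : ∀ i, Gi i | ∀ (i j : I) (h : i ≤ j), q i j h (x j) = x i} =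
        ⋂ (i : I), ⋂ (j : I), ⋂ (h : i ≤ j), {x : ∀ i, Gi i | q i j h (x j) = x i} := by
      ext x; simp [Set.mem_iInter]
    rw [this]
    refine isClosed_iInter fun i => isClosed_iInter fun j => isClosed_iInter fun h => ?_
    exact isClosed_eq ((continuous_of_discreteTopology).comp (continuous_apply j))
      (continuous_apply i)
  -- Stone-Weierstrass
  let A' : StarSubalgebra ℂ C(G, ℂ) := { A with star_mem' := fun {a} ha => hstar a ha }
  have hsep : A'.SeparatesPoints := by
    intro x y hxy
    have hv : x.val ≠ y.val := fun h => hxy (Subtype.ext h)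
    obtain ⟨i, hi⟩ : ∃ i, x.val i ≠ y.val i := by
      by_contra h
      push_neg at h
      exact hv (funext h)
    let F0 : C(G, ℂ) := ⟨fun z => if z.val i = x.val i then (1 : ℂ) else 0,
      (continuous_of_discreteTopology (f := fun w => if w = x.val i then (1:ℂ) else 0)).comp
        ((continuous_apply i).comp continuous_subtype_val)⟩
    have hmem : F0 ∈ A' := ⟨i, fun z => if z = x.val i then (1 : ℂ) else 0, fun x => rfl⟩
    refine ⟨⇑F0, ⟨F0, hmem, rfl⟩, ?_⟩
    simp only [F0, ContinuousMap.coe_mk]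
    simp [if_neg (Ne.symm hi)]
  have htop := ContinuousMap.starSubalgebra_topologicalClosure_eq_top_of_separatesPoints A' hsep
  have : closure (A' : Set C(G, ℂ)) = Set.univ := by
    have := congrArg (fun S : StarSubalgebra ℂ C(G, ℂ) => (S : Set C(G, ℂ))) htop
    simp [StarSubalgebra.topologicalClosure] at this
    exact this
  rw [dense_iff_closure_eq]
  exact this
end
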